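/- For any complex number $\delta$, the polynomial $xyz - y^2 - z^2 + \delta$ is irreducible in $\mathbb{C}[x,y,z]$. -/

import Mathlib

open Polynomial in
lemma aux_irred_deg_one {R : Type*} [CommRing R] [IsDomain R] {p : R[X]}
    (hd : p.natDegree = 1) (hp : p.IsPrimitive) : Irreducible p := by
  have hp0 : p ≠ 0 := fun h => by simp [h] at hd
  constructor
  · intro hu
    obtain ⟨r, -, hr⟩ := Polynomial.isUnit_iff.mp hu
    rw [← hr] at hd; simp at hd
  · intro a b hab
    have ha0 : a ≠ 0 := fun h => hp0 (by simp [hab, h])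
    have hb0 : b ≠ 0 := fun h => hp0 (by simp [hab, h])
    have hdeg : a.natDegree + b.natDegree = 1 := by
      rw [← Polynomial.natDegree_mul ha0 hb0, ← hab, hd]
    rcases Nat.add_eq_one_iff.mp hdeg with ⟨h1, h2⟩ | ⟨h1, h2⟩
    · left
      have ha : a = C (a.coeff 0) := Polynomial.eq_C_of_natDegree_eq_zero h1
      have hdvd : C (a.coeff 0) ∣ p := ha ▸ ⟨b, hab⟩
      exact ha ▸ (hp _ hdvd).map (C : R →+* R[X])
    · right
      have hb : b = C (b.coeff 0) := Polynomial.eq_C_of_natDegree_eq_zero h2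
      have hdvd : C (b.coeff 0) ∣ p := hb ▸ ⟨a, by rw [hab, mul_comm]⟩
      exact hb ▸ (hp _ hdvd).map (C : R →+* R[X])

open MvPolynomial in
lemma aux_prime_X (i : Fin 2) : Prime (X i : MvPolynomial (Fin 2) ℂ) := by
  have := (MulEquiv.prime_iff
    (((renameEquiv ℂ (Equiv.swap i 0)).trans (finSuccEquiv ℂ 1)).toMulEquiv)
    (p := (X i : MvPolynomial (Fin 2) ℂ)))
  rw [← this]
  simp [renameEquiv_apply, rename_X, Equiv.swap_apply_left, finSuccEquiv_X_zero]
  exact Polynomial.prime_X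

open MvPolynomial in
lemma aux_not_dvd (i : Fin 2) (δ : ℂ) :
    ¬ ((X i : MvPolynomial (Fin 2) ℂ) ∣ C δ - X 0 ^ 2 - X 1 ^ 2) := by
  intro h
  have h2 : (X i : MvPolynomial (Fin 2) ℂ) ∣ C δ - X (1 - i) ^ 2 := by
    have : (C δ - X 0 ^ 2 - X 1 ^ 2 : MvPolynomial (Fin 2) ℂ) + X i * X i
        = C δ - X (1 - i) ^ 2 := by
      fin_cases i <;> simp <;> ring
    exact this ▸ (dvd_add h (Dvd.intro _ rfl))
  have hne : i ≠ 1 - i := by fin_cases i <;> decide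
  let φ : MvPolynomial (Fin 2) ℂ →ₐ[ℂ] Polynomial ℂ :=
    aeval (fun j => if j = i then 0 else Polynomial.X)
  have h3 := map_dvd (φ : MvPolynomial (Fin 2) ℂ →+* Polynomial ℂ) h2
  simp only [φ, RingHom.coe_coe, map_sub, map_pow, aeval_X, aeval_C, if_pos rfl,
    if_neg (Ne.symm hne), if_true] at h3
  rw [zero_dvd_iff] at h3
  have := congrArg (Polynomial.coeff · 2) h3
  simp [Polynomial.algebraMap_eq, Polynomial.coeff_X_pow] at this

open MvPolynomial in
lemma aux_primitive (δ : ℂ) :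
    (Polynomial.C (X 0 * X 1 : MvPolynomial (Fin 2) ℂ) * Polynomial.X
      + Polynomial.C (C δ - X 0 ^ 2 - X 1 ^ 2)).IsPrimitive := by
  set b : MvPolynomial (Fin 2) ℂ := C δ - X 0 ^ 2 - X 1 ^ 2 with hb
  intro r hr
  rw [Polynomial.C_dvd_iff_dvd_coeff] at hr
  have hr1 : r ∣ X 0 * X 1 := by simpa using hr 1
  have hr0 : r ∣ b := by simpa using hr 0
  by_contra hu
  have hr_ne : r ≠ 0 := by
    rintro rfl
    rw [zero_dvd_iff] at hr1
    exact (mul_ne_zero (X_ne_zero 0) (X_ne_zero 1)) hr1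
  obtain ⟨s, hs_irr, hsr⟩ := WfDvdMonoid.exists_irreducible_factor hu hr_ne
  have hsX : s ∣ X 0 * X 1 := hsr.trans hr1
  have : ∃ i : Fin 2, s ∣ X i := by
    rcases (UniqueFactorizationMonoid.irreducible_iff_prime.mp hs_irr).2.2 _ _ hsX with h | h
    exacts [⟨0, h⟩, ⟨1, h⟩]
  obtain ⟨i, hi⟩ := this
  have hassoc : Associated s (X i) :=
    hs_irr.associated_of_dvd (aux_prime_X i).irreducible hi
  exact aux_not_dvd i δ ((hassoc.symm.dvd.trans hsr).trans hr0)

open MvPolynomial in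
theorem stmt_16 (δ : ℂ) :
    Irreducible (X 0 * X 1 * X 2 - (X 1) ^ 2 - (X 2) ^ 2 + C δ :
      MvPolynomial (Fin 3) ℂ) := by
  rw [← MulEquiv.irreducible_iff (finSuccEquiv ℂ 2).toMulEquiv]
  have key : (finSuccEquiv ℂ 2) (X 0 * X 1 * X 2 - (X 1)^2 - (X 2)^2 + C δ)
      = Polynomial.C (X 0 * X 1) * Polynomial.X + Polynomial.C (C δ - X 0 ^ 2 - X 1 ^ 2) := by
    have h1 : (finSuccEquiv ℂ 2) (X 1 : MvPolynomial (Fin 3) ℂ) = Polynomial.C (X 0) := by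
      have e1 : (X 1 : MvPolynomial (Fin 3) ℂ) = X (Fin.succ 0) := rfl
      rw [e1, finSuccEquiv_X_succ]
    have h2 : (finSuccEquiv ℂ 2) (X 2 : MvPolynomial (Fin 3) ℂ) = Polynomial.C (X 1) := by
      have e2 : (X 2 : MvPolynomial (Fin 3) ℂ) = X (Fin.succ 1) := rfl
      rw [e2, finSuccEquiv_X_succ]
    have hC : (finSuccEquiv ℂ 2) (C δ : MvPolynomial (Fin 3) ℂ) = Polynomial.C (C δ) := by
      simp [finSuccEquiv_apply]
    simp only [map_add, map_sub, map_mul, map_pow, finSuccEquiv_X_zero, h1, h2, hC]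
    ring
  show Irreducible ((finSuccEquiv ℂ 2) _)
  rw [key]
  apply aux_irred_deg_one
  · exact Polynomial.natDegree_linear (mul_ne_zero (X_ne_zero 0) (X_ne_zero 1))
  · exact aux_primitive δ
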